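/- Let F be a frieze of width n over a commutative ring R. Then m_{i+1,i} = α^((-1)^i) for all i ∈ ℤ, where α = m_{1,0}; in particular α is a unit. Similarly m_{i+n-1,i} = β^((-1)^i) where β = m_{n-1,0}. -/

import Mathlib

private lemma frieze_aux {R : Type*} [CommRing R] (u : ℤ → R)
    (h : ∀ i : ℤ, u i * u (i + 1) = 1) :
    ∃ α : Rˣ, (α : R) = u 0 ∧
      ∀ i : ℤ, u i = ((α ^ ((((-1 : ℤˣ) ^ i : ℤˣ) : ℤ)) : Rˣ) : R) := by
  refine ⟨⟨u 0, u 1, h 0, by rw [mul_comm]; exact h 0⟩, rfl, ?_⟩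
  set α : Rˣ := ⟨u 0, u 1, h 0, by rw [mul_comm]; exact h 0⟩ with hα
  have key : ∀ (x y : R) (e : ℤ), x * y = 1 → x = ((α ^ e : Rˣ) : R) →
      y = ((α ^ (-e) : Rˣ) : R) := by
    intro x y e hxy hx
    calc y = ((α ^ (-e) : Rˣ) : R) * (x * y) := by
              rw [hx, ← mul_assoc, ← Units.val_mul, ← zpow_add, neg_add_cancel,
                zpow_zero, Units.val_one, one_mul]
      _ = ((α ^ (-e) : Rˣ) : R) := by rw [hxy, mul_one]
  have estep : ∀ i : ℤ, ((((-1 : ℤˣ) ^ (i + 1) : ℤˣ) : ℤ)) =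
      -((((-1 : ℤˣ) ^ i : ℤˣ) : ℤ)) := by
    intro i
    rw [zpow_add_one, Units.val_mul]
    simp
  intro i
  induction i using Int.induction_on with
  | zero => simp [hα]
  | succ k ih =>
      rw [estep k]
      exact key _ _ _ (h k) ih
  | pred k ih =>
      have h' : u (-(k : ℤ) - 1) * u (-(k : ℤ)) = 1 := by
        have := h (-(k : ℤ) - 1); rwa [sub_add_cancel] at this
      rw [mul_comm] at h'
      have := key _ _ _ h' ih
      rw [this]
      congr 1
      have := estep (-(k : ℤ) - 1)
      rw [sub_add_cancel] at this
      rw [this, neg_neg]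

theorem frieze_second_and_penultimate_rows {R : Type*} [CommRing R] (n : ℤ) (hn : 2 ≤ n)
    (m : ℤ → ℤ → R)
    (htop : ∀ i : ℤ, m i i = 0) (hbot : ∀ i : ℤ, m (n + i) i = 0)
    (hdiamond : ∀ i j : ℤ, 0 < i - j → i - j < n →
      m i j * m (i + 1) (j + 1) - m i (j + 1) * m (i + 1) j = 1) :
    ∃ α β : Rˣ, (α : R) = m 1 0 ∧ (β : R) = m (n - 1) 0 ∧
      ∀ i : ℤ,
        m (i + 1) i = ((α ^ ((((-1 : ℤˣ) ^ i : ℤˣ) : ℤ)) : Rˣ) : R) ∧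
        m (i + n - 1) i = ((β ^ ((((-1 : ℤˣ) ^ i : ℤˣ) : ℤ)) : Rˣ) : R) := by
  have h1 : ∀ i : ℤ, m (i + 1) i * m (i + 1 + 1) (i + 1) = 1 := by
    intro i
    have hd := hdiamond (i + 1) i (by omega) (by omega)
    rw [htop (i + 1)] at hd
    linear_combination hd
  have h2 : ∀ i : ℤ, m (i + n - 1) i * m (i + 1 + n - 1) (i + 1) = 1 := by
    intro i
    have hd := hdiamond (i + n - 1) i (by omega) (by omega)
    have hb : m (i + n - 1 + 1) i = 0 := by
      rw [show i + n - 1 + 1 = n + i by ring]; exact hbot i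
    rw [hb, show i + n - 1 + 1 = i + 1 + n - 1 by ring] at hd
    linear_combination hd
  obtain ⟨α, hα0, hαi⟩ := frieze_aux (fun i => m (i + 1) i) h1
  obtain ⟨β, hβ0, hβi⟩ := frieze_aux (fun i => m (i + n - 1) i) h2
  exact ⟨α, β, by simpa using hα0, by simpa using hβ0, fun i => ⟨hαi i, hβi i⟩⟩
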